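/- arXiv:0804.0942 — 4 statements merged into one kernel-verified Lean document; each statement's English description precedes it below -/
import Mathlib

section
/- Let p, q, r be affinely independent points in the Euclidean plane ℝ², and suppose the angle ∠pqr is non-obtuse, i.e., ⟪p−q, r−q⟫ ≥ 0. Let τ, τ′ : ℝ² → ℝ be affine maps that agree on the line through q and r, with τ(p) ≤ τ(q) ≤ τ(r). Let S > 0 and 0 < ε < 1 be reals such that |τ(r) − τ(q)| ≤ (1−ε)·S·‖r−q‖ and ‖∇τ‖ < S. If τ(p) ≤ τ′(p) ≤ τ(p) + ε·S·d, where d is the distance from p to the line through q and r, then ‖∇τ′‖ < S. -/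
open RealInnerProductSpace

/-- The norm of the (constant) gradient of an affine map `ℝ² → ℝ`,
i.e. the operator norm of its linear part. -/
noncomputable def gradNorm (τ : EuclideanSpace ℝ (Fin 2) →ᵃ[ℝ] ℝ) : ℝ :=
  ‖LinearMap.toContinuousLinearMap τ.linear‖

lemma norm_sq_clm (u n : EuclideanSpace ℝ (Fin 2)) (hu : ‖u‖ = 1) (hn : ‖n‖ = 1)
    (hun : ⟪u, n⟫ = 0) (g : EuclideanSpace ℝ (Fin 2) →L[ℝ] ℝ) :
    ‖g‖ ^ 2 = (g u) ^ 2 + (g n) ^ 2 := by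
  set w := (InnerProductSpace.toDual ℝ (EuclideanSpace ℝ (Fin 2))).symm g with hw
  have hwx : ∀ x, ⟪w, x⟫ = g x := fun x => InnerProductSpace.toDual_symm_apply
  have hnormw : ‖w‖ = ‖g‖ := LinearIsometryEquiv.norm_map _ g
  have hnu : ⟪n, u⟫ = 0 := by rw [real_inner_comm]; exact hun
  have huu : ⟪u, u⟫ = (1:ℝ) := by rw [real_inner_self_eq_norm_sq, hu]; norm_num
  have hnn : ⟪n, n⟫ = (1:ℝ) := by rw [real_inner_self_eq_norm_sq, hn]; norm_num
  have hon : Orthonormal ℝ ![u, n] := by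
    constructor
    · intro i
      match i with
      | 0 => exact hu
      | 1 => exact hn
    · intro i j hij
      match i, j with
      | 0, 0 => exact absurd rfl hij
      | 1, 1 => exact absurd rfl hij
      | 0, 1 => exact hun
      | 1, 0 => exact hnu
  have hrange : Set.range ![u, n] = {u, n} := by
    ext x; simp [Matrix.range_cons, Matrix.range_empty, or_comm]
  have htop : Submodule.span ℝ ({u, n} : Set (EuclideanSpace ℝ (Fin 2))) = ⊤ := by
    apply Submodule.eq_top_of_finrank_eq
    rw [← hrange, finrank_span_eq_card hon.linearIndependent]
    simp [finrank_euclideanSpace_fin]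
  obtain ⟨c, d, hcd⟩ := Submodule.mem_span_pair.mp (htop ▸ Submodule.mem_top : w ∈ _)
  have hwu : ⟪w, u⟫ = c := by
    rw [real_inner_comm, ← hcd]
    simp only [inner_add_right, real_inner_smul_right, huu, hun, mul_one, mul_zero, add_zero]
  have hwn : ⟪w, n⟫ = d := by
    rw [real_inner_comm, ← hcd]
    simp only [inner_add_right, real_inner_smul_right, hnn, hnu, mul_one, mul_zero, zero_add]
  have hwsq : ‖w‖ ^ 2 = c ^ 2 + d ^ 2 := by
    rw [← real_inner_self_eq_norm_sq]
    nth_rewrite 2 [← hcd]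
    simp only [inner_add_right, real_inner_smul_right, hwu, hwn]
    ring
  rw [← hnormw, hwsq, ← hwx u, ← hwx n, hwu, hwn]

lemma final_ineq (t a a' S ε : ℝ) (hS : 0 < S) (hε0 : 0 < ε) (hε1 : ε < 1)
    (ht0 : 0 ≤ t) (htle : t ≤ (1 - ε) * S) (ha0 : a ≤ 0) (haa' : a ≤ a')
    (ha'le : a' ≤ a + ε * S) (hlt : t ^ 2 + a ^ 2 < S ^ 2) :
    t ^ 2 + a' ^ 2 < S ^ 2 := by
  rcases le_or_gt a' 0 with h | h
  · nlinarith [mul_nonneg (sub_nonneg.mpr haa') (neg_nonneg.mpr (by linarith : a + a' ≤ 0))]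
  · have ha'eps : a' ≤ ε * S := by linarith
    nlinarith [mul_pos (mul_pos hε0 (sub_pos.mpr hε1)) (mul_pos hS hS)]

theorem stmt_2 (p q r : EuclideanSpace ℝ (Fin 2))
    (hind : AffineIndependent ℝ ![p, q, r])
    (hangle : 0 ≤ (inner ℝ (p - q) (r - q) : ℝ))
    (τ τ' : EuclideanSpace ℝ (Fin 2) →ᵃ[ℝ] ℝ)
    (hagree : ∀ x ∈ affineSpan ℝ ({q, r} : Set (EuclideanSpace ℝ (Fin 2))), τ x = τ' x)
    (hpq : τ p ≤ τ q) (hqr : τ q ≤ τ r)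
    (S ε : ℝ) (hS : 0 < S) (hε0 : 0 < ε) (hε1 : ε < 1)
    (hedge : |τ r - τ q| ≤ (1 - ε) * S * ‖r - q‖)
    (hcausal : gradNorm τ < S)
    (hlift1 : τ p ≤ τ' p)
    (hlift2 : τ' p ≤ τ p +
      ε * S * Metric.infDist p (affineSpan ℝ ({q, r} : Set (EuclideanSpace ℝ (Fin 2))) : Set _)) :
    gradNorm τ' < S := by
  classical
  simp only [gradNorm] at hcausal ⊢
  set L := affineSpan ℝ ({q, r} : Set (EuclideanSpace ℝ (Fin 2))) with hLdef
  have hqL : q ∈ L := left_mem_affineSpan_pair ℝ q r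
  have hrL : r ∈ L := right_mem_affineSpan_pair ℝ q r
  have hτq : τ q = τ' q := hagree q hqL
  have hτr : τ r = τ' r := hagree r hrL
  -- nondegeneracy
  have hqr_ne : q ≠ r := by
    intro h
    have h12 : ![p, q, r] 1 = ![p, q, r] 2 := by simpa using h
    have := hind.injective h12
    simp at this
  have hrq : r - q ≠ 0 := sub_ne_zero.mpr hqr_ne.symm
  have hp_notmem : p ∉ L := by
    intro hp
    have hcol : Collinear ℝ ({p, q, r} : Set (EuclideanSpace ℝ (Fin 2))) :=
      collinear_insert_of_mem_affineSpan_pair hp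
    exact affineIndependent_iff_not_collinear_set.mp hind hcol
  have hmemL : ∀ s : ℝ, s • (r - q) + q ∈ L := by
    intro s
    have := smul_vsub_vadd_mem_affineSpan_pair (k := ℝ) s q r
    simpa [vsub_eq_sub, vadd_eq_add] using this
  -- vectors
  set v := r - q with hvdef
  have hnv : 0 < ‖v‖ := norm_pos_iff.mpr hrq
  set u : EuclideanSpace ℝ (Fin 2) := ‖v‖⁻¹ • v with hu_def
  have hu : ‖u‖ = 1 := norm_smul_inv_norm (𝕜 := ℝ) hrq
  have hvu : v = ‖v‖ • u := by
    rw [hu_def, smul_smul, mul_inv_cancel₀ hnv.ne', one_smul]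
  set c₁ : ℝ := ⟪p - q, u⟫ with hc₁def
  have hc₁0 : 0 ≤ c₁ := by
    rw [hc₁def, hu_def, real_inner_smul_right]
    exact mul_nonneg (inv_nonneg.mpr (norm_nonneg _)) hangle
  set w₀ : EuclideanSpace ℝ (Fin 2) := (p - q) - c₁ • u with hw₀def
  have hw₀ne : w₀ ≠ 0 := by
    intro h
    apply hp_notmem
    have h1 : p - q = c₁ • u := by rwa [hw₀def, sub_eq_zero] at h
    have h2 : c₁ • u = (c₁ * ‖v‖⁻¹) • (r - q) := by rw [hu_def, smul_smul, hvdef]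
    have hp_eq : p = (c₁ * ‖v‖⁻¹) • (r - q) + q := by
      rw [← h2, ← h1]; abel
    rw [hp_eq]; exact hmemL _
  have hnw₀ : 0 < ‖w₀‖ := norm_pos_iff.mpr hw₀ne
  have huu : ⟪u, u⟫ = (1:ℝ) := by
    rw [real_inner_self_eq_norm_sq, hu]; norm_num
  have hupq : ⟪u, p - q⟫ = c₁ := by rw [hc₁def]; exact (real_inner_comm u (p - q)).symm
  have huw₀ : ⟪u, w₀⟫ = 0 := by
    rw [hw₀def, inner_sub_right, real_inner_smul_right, huu, hupq]; ring
  set n : EuclideanSpace ℝ (Fin 2) := ‖w₀‖⁻¹ • w₀ with hn_def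
  have hn : ‖n‖ = 1 := norm_smul_inv_norm (𝕜 := ℝ) hw₀ne
  have hun : ⟪u, n⟫ = 0 := by rw [hn_def, real_inner_smul_right, huw₀, mul_zero]
  have hw₀n : w₀ = ‖w₀‖ • n := by
    rw [hn_def, smul_smul, mul_inv_cancel₀ hnw₀.ne', one_smul]
  have hpq_decomp : p - q = c₁ • u + ‖w₀‖ • n := by
    rw [← hw₀n, hw₀def]; abel
  -- distance upper bound
  have hd : Metric.infDist p (L : Set (EuclideanSpace ℝ (Fin 2))) ≤ ‖w₀‖ := by
    have hm : (c₁ * ‖v‖⁻¹) • (r - q) + q ∈ L := hmemL _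
    have hdist : dist p ((c₁ * ‖v‖⁻¹) • (r - q) + q) = ‖w₀‖ := by
      rw [dist_eq_norm]
      congr 1
      have h2 : (c₁ * ‖v‖⁻¹) • (r - q) = c₁ • u := by rw [hu_def, smul_smul, hvdef]
      rw [h2, hw₀def]; abel
    rw [← hdist]
    exact Metric.infDist_le_dist_of_mem hm
  -- affine-linear relation
  have haff : ∀ (σ : EuclideanSpace ℝ (Fin 2) →ᵃ[ℝ] ℝ) (x y : EuclideanSpace ℝ (Fin 2)),
      σ x - σ y = σ.linear (x - y) := by
    intro σ x y
    have h := σ.map_vadd y (x - y)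
    simp only [vadd_eq_add, sub_add_cancel] at h
    rw [h]; ring
  set g := LinearMap.toContinuousLinearMap τ.linear with hgdef
  set g' := LinearMap.toContinuousLinearMap τ'.linear with hg'def
  have hgapp : ∀ x : EuclideanSpace ℝ (Fin 2), g x = τ.linear x := fun _ => rfl
  have hg'app : ∀ x : EuclideanSpace ℝ (Fin 2), g' x = τ'.linear x := fun _ => rfl
  have hgv : g v = τ r - τ q := by rw [hgapp, hvdef, ← haff]
  have hg'v : g' v = τ r - τ q := by rw [hg'app, hvdef, ← haff, ← hτr, ← hτq]
  have hgpq : g (p - q) = τ p - τ q := by rw [hgapp, ← haff]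
  have hg'pq : g' (p - q) = τ' p - τ q := by rw [hg'app, ← haff, ← hτq]
  -- make everything opaque
  clear_value g g' n w₀ c₁ u v L
  obtain ⟨t, htdef⟩ : ∃ t : ℝ, g u = t := ⟨_, rfl⟩
  obtain ⟨a, hadef⟩ : ∃ a : ℝ, g n = a := ⟨_, rfl⟩
  obtain ⟨a', ha'def⟩ : ∃ a' : ℝ, g' n = a' := ⟨_, rfl⟩
  -- t facts
  have hgvs : g v = ‖v‖ • (g u) := by rw [← map_smul, ← hvu]
  have hg'vs : g' v = ‖v‖ • (g' u) := by rw [← map_smul, ← hvu]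
  have ht_eq : ‖v‖ * t = τ r - τ q := by
    rw [← htdef, ← smul_eq_mul, ← hgvs, hgv]
  have hg'u : g' u = t := by
    have h1 : ‖v‖ * g' u = ‖v‖ * t := by
      rw [← smul_eq_mul, ← hg'vs, hg'v, ht_eq]
    exact mul_left_cancel₀ hnv.ne' h1
  have ht0 : 0 ≤ t := by
    by_contra h
    push_neg at h
    have h2 : 0 < ‖v‖ * (-t) := mul_pos hnv (neg_pos.mpr h)
    rw [mul_neg] at h2
    linarith [sub_nonneg.mpr hqr, ht_eq]
  have htle : t ≤ (1 - ε) * S := by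
    have h1 : τ r - τ q ≤ (1 - ε) * S * ‖v‖ := le_trans (le_abs_self _) hedge
    have h2 : ‖v‖ * t ≤ ‖v‖ * ((1 - ε) * S) := by
      have h3 : ‖v‖ * ((1 - ε) * S) = (1 - ε) * S * ‖v‖ := by ring
      rw [ht_eq, h3]; linarith
    exact le_of_mul_le_mul_left h2 hnv
  -- a facts
  have hga : c₁ * t + ‖w₀‖ * a = τ p - τ q := by
    rw [← hgpq, hpq_decomp, map_add, map_smul, map_smul, smul_eq_mul, smul_eq_mul,
      htdef, hadef]
  have ha0 : a ≤ 0 := by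
    by_contra h
    push_neg at h
    have h1 : 0 < ‖w₀‖ * a := mul_pos hnw₀ h
    linarith [mul_nonneg hc₁0 ht0, sub_nonpos.mpr hpq]
  -- a' facts
  have hga' : c₁ * t + ‖w₀‖ * a' = τ' p - τ q := by
    rw [← hg'pq, hpq_decomp, map_add, map_smul, map_smul, smul_eq_mul, smul_eq_mul,
      hg'u, ha'def]
  have hδ0 : 0 ≤ τ' p - τ p := sub_nonneg.mpr hlift1
  have hδle : τ' p - τ p ≤ ε * S * ‖w₀‖ := by
    have h2 : ε * S * Metric.infDist p (L : Set (EuclideanSpace ℝ (Fin 2))) ≤ ε * S * ‖w₀‖ :=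
      mul_le_mul_of_nonneg_left hd (by positivity)
    linarith
  have haa' : a ≤ a' := by
    have h1 : ‖w₀‖ * a ≤ ‖w₀‖ * a' := by linarith
    exact le_of_mul_le_mul_left h1 hnw₀
  have ha'le : a' ≤ a + ε * S := by
    have h1 : ‖w₀‖ * a' ≤ ‖w₀‖ * (a + ε * S) := by
      have hr1 : ‖w₀‖ * (a + ε * S) = ‖w₀‖ * a + ε * S * ‖w₀‖ := by ring
      rw [hr1]; linarith
    exact le_of_mul_le_mul_left h1 hnw₀
  -- norms
  have hsq : ‖g‖ ^ 2 = t ^ 2 + a ^ 2 := by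
    have h := norm_sq_clm u n hu hn hun g
    rwa [htdef, hadef] at h
  have hsq' : ‖g'‖ ^ 2 = t ^ 2 + a' ^ 2 := by
    have h := norm_sq_clm u n hu hn hun g'
    rwa [hg'u, ha'def] at h
  have hgsqlt : t ^ 2 + a ^ 2 < S ^ 2 := by
    rw [← hsq]
    exact pow_lt_pow_left₀ hcausal (norm_nonneg _) (by norm_num)
  have hfinal : t ^ 2 + a' ^ 2 < S ^ 2 :=
    final_ineq t a a' S ε hS hε0 hε1 ht0 htle ha0 haa' ha'le hgsqlt
  have h1 : ‖g'‖ ^ 2 < S ^ 2 := by rw [hsq']; exact hfinal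
  exact lt_of_pow_lt_pow_left₀ 2 hS.le h1
end

section
/- Let p, q, r be affinely independent points in the Euclidean plane ℝ², and suppose the angle θ = ∠pqr is obtuse, i.e., ⟪p−q, r−q⟫ < 0. Let τ, τ′ : ℝ² → ℝ be affine maps that agree on the line through q and r, with τ(p) ≤ τ(q) ≤ τ(r). Let S > 0 and 0 < ε < 1 be reals such that |τ(r) − τ(q)| ≤ (1−ε)·S·(sin θ)·‖r−q‖ and ‖∇τ‖ < S. If τ(p) ≤ τ′(p) ≤ τ(p) + ε·S·d, where d is the distance from p to the line through q and r, then ‖∇τ′‖ < S. -/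
lemma aux_perp_eq_zero {u n y : EuclideanSpace ℝ (Fin 2)}
    (hu : ‖u‖ = 1) (hn : ‖n‖ = 1) (hun : (inner ℝ u n : ℝ) = 0)
    (hyu : (inner ℝ y u : ℝ) = 0) (hyn : (inner ℝ y n : ℝ) = 0) : y = 0 := by
  by_contra hy
  have hynorm : ‖y‖ ≠ 0 := norm_ne_zero_iff.2 hy
  have hnu : (inner ℝ n u : ℝ) = 0 := by rw [real_inner_comm]; exact hun
  have huy : (inner ℝ u y : ℝ) = 0 := by rw [real_inner_comm]; exact hyu
  have hny : (inner ℝ n y : ℝ) = 0 := by rw [real_inner_comm]; exact hyn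
  have h1 : (inner ℝ u u : ℝ) = 1 := by
    rw [real_inner_self_eq_norm_sq, hu]; norm_num
  have h2 : (inner ℝ n n : ℝ) = 1 := by
    rw [real_inner_self_eq_norm_sq, hn]; norm_num
  have h3 : (inner ℝ (‖y‖⁻¹ • y) (‖y‖⁻¹ • y) : ℝ) = 1 := by
    rw [real_inner_smul_left, real_inner_smul_right, real_inner_self_eq_norm_sq]
    field_simp
  have h4 : (inner ℝ (‖y‖⁻¹ • y) u : ℝ) = 0 := by rw [real_inner_smul_left, hyu]; ring
  have h5 : (inner ℝ (‖y‖⁻¹ • y) n : ℝ) = 0 := by rw [real_inner_smul_left, hyn]; ring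
  have h6 : (inner ℝ u (‖y‖⁻¹ • y) : ℝ) = 0 := by rw [real_inner_smul_right, huy]; ring
  have h7 : (inner ℝ n (‖y‖⁻¹ • y) : ℝ) = 0 := by rw [real_inner_smul_right, hny]; ring
  have hON : Orthonormal ℝ ![u, n, ‖y‖⁻¹ • y] := by
    rw [orthonormal_iff_ite]
    intro i j
    fin_cases i <;> fin_cases j <;>
      first
        | exact h1 | exact h2 | exact h3 | exact h4 | exact h5 | exact h6 | exact h7
        | exact hun | exact hnu
  have h8 := hON.linearIndependent.fintype_card_le_finrank
  rw [finrank_euclideanSpace_fin] at h8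
  simp at h8

lemma aux_lower (f : EuclideanSpace ℝ (Fin 2) →L[ℝ] ℝ) {u n : EuclideanSpace ℝ (Fin 2)}
    (hu : ‖u‖ = 1) (hn : ‖n‖ = 1) (hun : (inner ℝ u n : ℝ) = 0) :
    (f u) ^ 2 + (f n) ^ 2 ≤ ‖f‖ ^ 2 := by
  have hnu : (inner ℝ n u : ℝ) = 0 := by rw [real_inner_comm]; exact hun
  set x := f u • u + f n • n with hx
  have hfx : f x = (f u) ^ 2 + (f n) ^ 2 := by
    simp [hx, map_add, map_smul, smul_eq_mul]; ring
  have hx2 : ‖x‖ ^ 2 = (f u) ^ 2 + (f n) ^ 2 := by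
    rw [← real_inner_self_eq_norm_sq]
    simp only [hx, inner_add_left, inner_add_right, real_inner_smul_left,
      real_inner_smul_right, hun, hnu, real_inner_self_eq_norm_sq, hu, hn,
      norm_smul, Real.norm_eq_abs, mul_pow, sq_abs]
    ring
  have hle : f x ≤ ‖f‖ * ‖x‖ := le_trans (le_abs_self _) (by simpa using f.le_opNorm x)
  nlinarith [norm_nonneg x, norm_nonneg f, sq_nonneg (‖f‖ - ‖x‖)]

lemma aux_upper (f : EuclideanSpace ℝ (Fin 2) →L[ℝ] ℝ) {u n : EuclideanSpace ℝ (Fin 2)}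
    (hu : ‖u‖ = 1) (hn : ‖n‖ = 1) (hun : (inner ℝ u n : ℝ) = 0) :
    ‖f‖ ≤ Real.sqrt ((f u) ^ 2 + (f n) ^ 2) := by
  have hnu : (inner ℝ n u : ℝ) = 0 := by rw [real_inner_comm]; exact hun
  apply f.opNorm_le_bound (Real.sqrt_nonneg _)
  intro x
  set α : ℝ := inner ℝ x u with hα
  set β : ℝ := inner ℝ x n with hβ
  have hy : x - α • u - β • n = 0 := by
    apply aux_perp_eq_zero hu hn hun
    · simp only [inner_sub_left, real_inner_smul_left, real_inner_self_eq_norm_sq, hu, hn,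
        hnu, ← hα]
      ring
    · simp only [inner_sub_left, real_inner_smul_left, real_inner_self_eq_norm_sq, hu, hn,
        hun, ← hβ]
      ring
  have hxe : x = α • u + β • n := by
    have := sub_eq_zero.mp (by rwa [sub_sub] at hy)
    simpa using this
  have hfx : f x = α * f u + β * f n := by
    rw [hxe]; simp [map_add, map_smul, smul_eq_mul]
  have hx2 : ‖x‖ ^ 2 = α ^ 2 + β ^ 2 := by
    rw [← real_inner_self_eq_norm_sq]
    conv_lhs => rw [hxe]
    simp only [inner_add_left, inner_add_right, real_inner_smul_left,
      real_inner_smul_right, hun, hnu, real_inner_self_eq_norm_sq, hu, hn,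
      norm_smul, Real.norm_eq_abs, mul_pow, sq_abs]
    ring
  have key : (f x) ^ 2 ≤ ((f u) ^ 2 + (f n) ^ 2) * ‖x‖ ^ 2 := by
    rw [hfx, hx2]
    nlinarith [sq_nonneg (f u * β - f n * α)]
  rw [Real.norm_eq_abs, ← Real.sqrt_sq_eq_abs]
  calc Real.sqrt ((f x) ^ 2) ≤ Real.sqrt (((f u) ^ 2 + (f n) ^ 2) * ‖x‖ ^ 2) :=
        Real.sqrt_le_sqrt key
    _ = Real.sqrt ((f u) ^ 2 + (f n) ^ 2) * ‖x‖ := by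
        rw [Real.sqrt_mul (by positivity), Real.sqrt_sq (norm_nonneg x)]

theorem stmt_3 (p q r : EuclideanSpace ℝ (Fin 2))
    (hind : AffineIndependent ℝ ![p, q, r])
    (hangle : (inner ℝ (p - q) (r - q) : ℝ) < 0)
    (τ τ' : EuclideanSpace ℝ (Fin 2) →ᵃ[ℝ] ℝ)
    (hagree : ∀ x ∈ affineSpan ℝ ({q, r} : Set (EuclideanSpace ℝ (Fin 2))), τ x = τ' x)
    (hpq : τ p ≤ τ q) (hqr : τ q ≤ τ r)
    (S ε : ℝ) (hS : 0 < S) (hε0 : 0 < ε) (hε1 : ε < 1)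
    (hedge : |τ r - τ q| ≤
      (1 - ε) * S * Real.sin (InnerProductGeometry.angle (p - q) (r - q)) * ‖r - q‖)
    (hcausal : gradNorm τ < S)
    (hlift1 : τ p ≤ τ' p)
    (hlift2 : τ' p ≤ τ p +
      ε * S * Metric.infDist p (affineSpan ℝ ({q, r} : Set (EuclideanSpace ℝ (Fin 2))) : Set _)) :
    gradNorm τ' < S := by
  have hcol : ¬ Collinear ℝ ({p, q, r} : Set (EuclideanSpace ℝ (Fin 2))) :=
    affineIndependent_iff_not_collinear_set.mp hind
  set v : EuclideanSpace ℝ (Fin 2) := r - q with hv_def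
  clear_value v
  set w : EuclideanSpace ℝ (Fin 2) := p - q with hw_def
  clear_value w
  have hv0 : v ≠ 0 := by
    intro h; rw [h, inner_zero_right] at hangle; exact lt_irrefl 0 hangle
  have hw0 : w ≠ 0 := by
    intro h; rw [h, inner_zero_left] at hangle; exact lt_irrefl 0 hangle
  have hnv : 0 < ‖v‖ := norm_pos_iff.2 hv0
  have hnw : 0 < ‖w‖ := norm_pos_iff.2 hw0
  set u : EuclideanSpace ℝ (Fin 2) := ‖v‖⁻¹ • v with hu_def
  clear_value u
  have hu_norm : ‖u‖ = 1 := by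
    rw [hu_def, norm_smul, Real.norm_eq_abs, abs_inv, abs_norm, inv_mul_cancel₀ hnv.ne']
  have huu : (inner ℝ u u : ℝ) = 1 := by rw [real_inner_self_eq_norm_sq, hu_norm]; norm_num
  set t : ℝ := inner ℝ w u with ht_def
  clear_value t
  set m : EuclideanSpace ℝ (Fin 2) := w - t • u with hm_def
  clear_value m
  have hmu : (inner ℝ m u : ℝ) = 0 := by
    rw [hm_def, inner_sub_left, real_inner_smul_left, huu, ← ht_def]; ring
  have hm0 : m ≠ 0 := by
    intro h
    apply hcol
    rw [collinear_iff_of_mem (Set.mem_insert_of_mem p (Set.mem_insert q {r}))]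
    refine ⟨v, fun x hx => ?_⟩
    rcases hx with hx | hx | hx
    · refine ⟨t * ‖v‖⁻¹, ?_⟩
      have hwtu : w = t • u := by rwa [hm_def, sub_eq_zero] at h
      rw [hx]
      have : p = t • u + q := by
        rw [← hwtu]; rw [hw_def]; abel
      rw [this, hu_def, smul_smul]
      simp [vadd_eq_add]
    · exact ⟨0, by simp [hx]⟩
    · refine ⟨1, ?_⟩
      simp only [Set.mem_singleton_iff] at hx
      rw [hx, one_smul, hv_def]
      simp [vadd_eq_add]
  set d : ℝ := ‖m‖ with hd_def
  clear_value d
  have hd : 0 < d := by rw [hd_def]; exact norm_pos_iff.2 hm0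
  set n : EuclideanSpace ℝ (Fin 2) := d⁻¹ • m with hn_def
  clear_value n
  have hn_norm : ‖n‖ = 1 := by
    rw [hn_def, norm_smul, Real.norm_eq_abs, abs_inv, abs_of_pos hd, hd_def,
      inv_mul_cancel₀ (norm_ne_zero_iff.2 hm0)]
  have hun : (inner ℝ u n : ℝ) = 0 := by
    rw [hn_def, real_inner_smul_right, real_inner_comm, hmu]; ring
  -- trigonometry
  set θ : ℝ := InnerProductGeometry.angle w v with hθ_def
  clear_value θ
  set c : ℝ := Real.cos θ with hc_def
  clear_value c
  set s : ℝ := Real.sin θ with hs_def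
  clear_value s
  have hcs : s ^ 2 + c ^ 2 = 1 := by rw [hs_def, hc_def]; exact Real.sin_sq_add_cos_sq θ
  have hc : c = (inner ℝ w v : ℝ) / (‖w‖ * ‖v‖) := by
    rw [hc_def, hθ_def]; exact InnerProductGeometry.cos_angle w v
  have hs0 : 0 ≤ s := by
    rw [hs_def, hθ_def]
    exact Real.sin_nonneg_of_nonneg_of_le_pi
      (InnerProductGeometry.angle_nonneg w v) (InnerProductGeometry.angle_le_pi w v)
  have hcneg : c < 0 := by
    rw [hc]; exact div_neg_of_neg_of_pos hangle (by positivity)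
  have htc : t = c * ‖w‖ := by
    rw [ht_def, hu_def, real_inner_smul_right, hc]
    field_simp
  have ht_neg : t < 0 := by
    rw [htc]; exact mul_neg_of_neg_of_pos hcneg hnw
  have hd_eq : d ^ 2 = ‖w‖ ^ 2 - t ^ 2 := by
    rw [hd_def, hm_def, norm_sub_sq_real, real_inner_smul_right, ← ht_def, norm_smul,
      Real.norm_eq_abs, mul_pow, sq_abs, hu_norm]
    ring
  have hd_ws : d = ‖w‖ * s := by
    have h2 : d ^ 2 = (‖w‖ * s) ^ 2 := by
      rw [hd_eq, htc]; linear_combination (-(‖w‖ ^ 2)) * hcs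
    have h3 := congrArg Real.sqrt h2
    rwa [Real.sqrt_sq hd.le, Real.sqrt_sq (mul_nonneg (norm_nonneg w) hs0)] at h3
  have hs_pos : 0 < s := by nlinarith only [hd, hd_ws, hnw, hs0]
  have hc_gt : -1 < c := by nlinarith only [hcs, mul_pos hs_pos hs_pos, hcneg]
  -- linear parts
  have hLsub : ∀ x y, τ.linear (x - y) = τ x - τ y := fun x y => by
    simpa using τ.linearMap_vsub x y
  have hL'sub : ∀ x y, τ'.linear (x - y) = τ' x - τ' y := fun x y => by
    simpa using τ'.linearMap_vsub x y
  have hq_mem : q ∈ affineSpan ℝ ({q, r} : Set (EuclideanSpace ℝ (Fin 2))) :=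
    subset_affineSpan ℝ _ (by simp)
  have hr_mem : r ∈ affineSpan ℝ ({q, r} : Set (EuclideanSpace ℝ (Fin 2))) :=
    subset_affineSpan ℝ _ (by simp)
  have hτq : τ q = τ' q := hagree q hq_mem
  have hτr : τ r = τ' r := hagree r hr_mem
  set a : ℝ := τ.linear u with ha_def
  clear_value a
  set b₀ : ℝ := τ.linear n with hb0_def
  clear_value b₀
  set b : ℝ := τ'.linear n with hb_def2
  clear_value b
  have hau : ‖v‖ * a = τ r - τ q := by
    rw [ha_def, hu_def, map_smul, smul_eq_mul, ← mul_assoc, mul_inv_cancel₀ hnv.ne',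
      one_mul, hv_def, hLsub]
  have hL'u : τ'.linear u = a := by
    have h1 : ‖v‖ * τ'.linear u = τ' r - τ' q := by
      rw [hu_def, map_smul, smul_eq_mul, ← mul_assoc, mul_inv_cancel₀ hnv.ne',
        one_mul, hv_def, hL'sub]
    have h2 : ‖v‖ * τ'.linear u = ‖v‖ * a := by rw [h1, hau, hτq, hτr]
    exact mul_left_cancel₀ hnv.ne' h2
  have ha_nonneg : 0 ≤ a := by nlinarith only [hau, hqr, hnv]
  have hA : a ≤ (1 - ε) * S * s := by
    rw [abs_of_nonneg (by linarith : (0:ℝ) ≤ τ r - τ q)] at hedge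
    rw [← hau] at hedge
    nlinarith only [hedge, hnv]
  -- the projection point
  set pbar : EuclideanSpace ℝ (Fin 2) := t • u + q with hpbar_def
  clear_value pbar
  have hpbar_mem : pbar ∈ affineSpan ℝ ({q, r} : Set (EuclideanSpace ℝ (Fin 2))) := by
    have heq : pbar = AffineMap.lineMap q r (t * ‖v‖⁻¹) := by
      rw [hpbar_def, AffineMap.lineMap_apply, hu_def, smul_smul]
      simp [vadd_eq_add, hv_def, mul_comm]
    rw [heq]
    exact AffineMap.lineMap_mem_affineSpan_pair _ _ _
  have hτ'pbar : τ pbar = τ' pbar := hagree _ hpbar_mem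
  have hpbar_q : τ pbar - τ q = t * a := by
    rw [← hLsub]
    have : pbar - q = t • u := by rw [hpbar_def]; abel
    rw [this, map_smul, smul_eq_mul, ha_def]
  have hp_pbar : p - pbar = m := by
    rw [hpbar_def, hm_def, hw_def]; abel
  have hm_dn : m = d • n := by
    rw [hn_def, smul_smul, mul_inv_cancel₀ hd.ne', one_smul]
  have hτp_pbar : τ p - τ pbar = d * b₀ := by
    rw [← hLsub, hp_pbar, hm_dn, map_smul, smul_eq_mul, hb0_def]
  have hτ'p_pbar : τ' p - τ' pbar = d * b := by
    rw [← hL'sub, hp_pbar, hm_dn, map_smul, smul_eq_mul, hb_def2]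
  -- scalar inequalities
  have hb0_upper : d * b₀ ≤ a * (-t) := by nlinarith only [hpbar_q, hτp_pbar, hpq]
  have hb0_le_b : b₀ ≤ b := by
    have h1 : d * b₀ ≤ d * b := by
      nlinarith only [hτp_pbar, hτ'p_pbar, hτ'pbar, hlift1]
    exact le_of_mul_le_mul_left h1 hd
  have hinf_le : Metric.infDist p
      ((affineSpan ℝ ({q, r} : Set (EuclideanSpace ℝ (Fin 2)))) : Set _) ≤ d := by
    refine le_trans (Metric.infDist_le_dist_of_mem hpbar_mem) ?_
    rw [dist_eq_norm, hp_pbar, hd_def]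
  have hb_le : b ≤ b₀ + ε * S := by
    have hεS : (0:ℝ) ≤ ε * S := by positivity
    have h1 : ε * S * Metric.infDist p
        ((affineSpan ℝ ({q, r} : Set (EuclideanSpace ℝ (Fin 2)))) : Set _) ≤ ε * S * d :=
      mul_le_mul_of_nonneg_left hinf_le hεS
    have h2 : d * b ≤ d * (b₀ + ε * S) := by nlinarith only [hτp_pbar, hτ'p_pbar, hτ'pbar, hlift2, h1]
    exact le_of_mul_le_mul_left h2 hd
  have hb0_bound : b₀ ≤ (1 - ε) * S * (-c) := by
    have h1 : ‖w‖ * s * b₀ ≤ a * (-(c * ‖w‖)) := by rw [← hd_ws, ← htc]; exact hb0_upper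
    have h2 : a * (-c) ≤ (1 - ε) * S * s * (-c) :=
      mul_le_mul_of_nonneg_right hA (by linarith)
    have h3 : s * b₀ ≤ (1 - ε) * S * s * (-c) := by nlinarith only [h1, hnw, h2]
    nlinarith only [h3, hs_pos]
  -- operator norm bounds
  have hlow : a ^ 2 + b₀ ^ 2 ≤ (gradNorm τ) ^ 2 := by
    have := aux_lower (LinearMap.toContinuousLinearMap τ.linear) hu_norm hn_norm hun
    simpa [gradNorm, ha_def, hb0_def] using this
  have hgn0 : 0 ≤ gradNorm τ := norm_nonneg _
  have hB0 : a ^ 2 + b₀ ^ 2 < S ^ 2 := by nlinarith only [hlow, hcausal, hgn0]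
  have hupper : gradNorm τ' ≤ Real.sqrt (a ^ 2 + b ^ 2) := by
    have := aux_upper (LinearMap.toContinuousLinearMap τ'.linear) hu_norm hn_norm hun
    have h2 : (LinearMap.toContinuousLinearMap τ'.linear) u = a := by
      simpa using hL'u
    have h3 : (LinearMap.toContinuousLinearMap τ'.linear) n = b := by
      simp [hb_def2]
    rw [h2, h3] at this
    exact this
  have hab : a ^ 2 + b ^ 2 < S ^ 2 := by
    rcases le_or_gt b 0 with hb | hb
    · nlinarith only [hB0, hb0_le_b, hb]
    · have hkey : (0:ℝ) < (1 - ε) * ε * ((1 + c) * (S * S)) :=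
        mul_pos (mul_pos (by linarith only [hε1]) hε0)
          (mul_pos (by linarith only [hc_gt]) (mul_pos hS hS))
      have hbB : b ≤ (1 - ε) * S * (-c) + ε * S := by
        linarith only [hb_le, hb0_bound]
      have h_bsq : b * b ≤ ((1 - ε) * S * (-c) + ε * S) * ((1 - ε) * S * (-c) + ε * S) :=
        mul_self_le_mul_self hb.le hbB
      have h_asq : a * a ≤ ((1 - ε) * S * s) * ((1 - ε) * S * s) :=
        mul_self_le_mul_self ha_nonneg hA
      have hcs' : (1 - ε) ^ 2 * S ^ 2 * s ^ 2 + (1 - ε) ^ 2 * S ^ 2 * c ^ 2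
          = (1 - ε) ^ 2 * S ^ 2 := by
        linear_combination ((1 - ε) ^ 2 * S ^ 2) * hcs
      nlinarith only [h_asq, h_bsq, hcs', hkey]
  calc gradNorm τ' ≤ Real.sqrt (a ^ 2 + b ^ 2) := hupper
    _ < Real.sqrt (S ^ 2) := by
        apply Real.sqrt_lt_sqrt (by positivity) hab
    _ = S := Real.sqrt_sq hS.le
end

section
/- Let p, q, r be affinely independent points in ℝ², let u = (p+r)/2, and let ε, φ be reals with 0 < ε < φ < (1+ε)/2. For an ordered triple (a,b,c) of affinely independent points define dw(a,b,c) := min{ (1−ε)·dist(a, aff{b,c}), (1−φ)·dist(b, aff{a,c}), (1−φ)·dist(c, aff{a,b}) }. Then dw(q,r,p) > dw(u,p,q). -/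
open Metric RealInnerProductSpace

private lemma gram_expand (v w : EuclideanSpace ℝ (Fin 2)) (α β γ δ : ℝ) :
    ‖α • v + β • w‖ ^ 2 * ‖γ • v + δ • w‖ ^ 2 - ⟪α • v + β • w, γ • v + δ • w⟫ ^ 2
      = (α * δ - β * γ) ^ 2 * (‖v‖ ^ 2 * ‖w‖ ^ 2 - ⟪v, w⟫ ^ 2) := by
  simp only [← real_inner_self_eq_norm_sq]
  simp only [inner_add_left, inner_add_right, real_inner_smul_left, real_inner_smul_right,
    real_inner_comm w v]
  ring

private lemma infDist_line (a b x : EuclideanSpace ℝ (Fin 2)) (hab : b ≠ a) :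
    Metric.infDist x (affineSpan ℝ ({a, b} : Set (EuclideanSpace ℝ (Fin 2))) : Set _)
      = Real.sqrt (‖x - a‖ ^ 2 * ‖b - a‖ ^ 2 - ⟪x - a, b - a⟫ ^ 2) / ‖b - a‖ := by
  have hvne : b - a ≠ 0 := sub_ne_zero.mpr hab
  have hvn : (0:ℝ) < ‖b - a‖ := norm_pos_iff.mpr hvne
  set t : ℝ := ⟪x - a, b - a⟫ / ‖b - a‖ ^ 2 with ht
  set w : EuclideanSpace ℝ (Fin 2) := x - a - t • (b - a) with hw
  have hwv : ⟪w, b - a⟫ = 0 := by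
    rw [hw, inner_sub_left, real_inner_smul_left, ht, real_inner_self_eq_norm_sq]
    field_simp
    ring
  have key : Metric.infDist x (affineSpan ℝ ({a, b} : Set (EuclideanSpace ℝ (Fin 2))) : Set _)
      = ‖w‖ := by
    refine le_antisymm ?_ ?_
    · have hmem : t • (b - a) + a
          ∈ (affineSpan ℝ ({a, b} : Set (EuclideanSpace ℝ (Fin 2))) : Set _) := by
        have h := AffineMap.lineMap_mem_affineSpan_pair t a b
        simpa [AffineMap.lineMap_apply, vsub_eq_sub, vadd_eq_add] using h
      refine le_trans (Metric.infDist_le_dist_of_mem hmem) ?_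
      rw [dist_eq_norm, hw, show x - (t • (b - a) + a) = x - a - t • (b - a) by abel]
    · have hne : ((affineSpan ℝ ({a, b} : Set (EuclideanSpace ℝ (Fin 2)))
          : Set _)).Nonempty := ⟨a, left_mem_affineSpan_pair ℝ a b⟩
      rw [Metric.infDist_eq_iInf]
      have : Nonempty ((affineSpan ℝ ({a, b} : Set (EuclideanSpace ℝ (Fin 2)))
          : Set (EuclideanSpace ℝ (Fin 2)))) := hne.to_subtype
      refine le_ciInf fun z => ?_
      obtain ⟨z, hz⟩ := z
      obtain ⟨s, hs⟩ : ∃ s : ℝ, s • (b -ᵥ a) = z -ᵥ a := by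
        refine vadd_left_mem_affineSpan_pair.mp ?_
        simpa [vsub_eq_sub, vadd_eq_add] using hz
      have hzz : z = s • (b - a) + a := by
        simp only [vsub_eq_sub] at hs
        rw [hs]; abel
      have hz' : x - z = w + (t - s) • (b - a) := by
        rw [hzz, hw, sub_smul]; abel
      have hexp := norm_add_sq_real w ((t - s) • (b - a))
      rw [real_inner_smul_right, hwv, mul_zero] at hexp
      have h2 : ‖w‖ ^ 2 ≤ ‖x - z‖ ^ 2 := by
        rw [hz', hexp]
        linarith [sq_nonneg ‖(t - s) • (b - a)‖]
      have h3 := Real.sqrt_le_sqrt h2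
      rw [Real.sqrt_sq (norm_nonneg _), Real.sqrt_sq (norm_nonneg _)] at h3
      simpa [dist_eq_norm] using h3
  rw [key]
  have hG : ‖x - a‖ ^ 2 * ‖b - a‖ ^ 2 - ⟪x - a, b - a⟫ ^ 2 = ‖w‖ ^ 2 * ‖b - a‖ ^ 2 := by
    have hww : ‖x - a - t • (b - a)‖ ^ 2
        = ‖x - a‖ ^ 2 - 2 * (t * ⟪x - a, b - a⟫) + t ^ 2 * ‖b - a‖ ^ 2 := by
      rw [norm_sub_sq_real (x - a) (t • (b - a)), real_inner_smul_right, norm_smul,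
        Real.norm_eq_abs, mul_pow, sq_abs]
    rw [hw, hww, ht]
    field_simp
    ring
  rw [hG, Real.sqrt_mul (sq_nonneg _), Real.sqrt_sq (norm_nonneg _), Real.sqrt_sq (norm_nonneg _),
    mul_div_assoc, div_self hvn.ne', mul_one]

/-- The "diminished width" of triangle `abc` with apex `a`. -/
noncomputable def dw (ε φ : ℝ) (a b c : EuclideanSpace ℝ (Fin 2)) : ℝ :=
  min ((1 - ε) * Metric.infDist a (affineSpan ℝ ({b, c} : Set (EuclideanSpace ℝ (Fin 2))) : Set _))
    (min ((1 - φ) * Metric.infDist b (affineSpan ℝ ({a, c} : Set (EuclideanSpace ℝ (Fin 2))) : Set _))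
         ((1 - φ) * Metric.infDist c (affineSpan ℝ ({a, b} : Set (EuclideanSpace ℝ (Fin 2))) : Set _)))

set_option maxHeartbeats 1000000 in
theorem stmt_8 (p q r : EuclideanSpace ℝ (Fin 2))
    (hind : AffineIndependent ℝ ![p, q, r])
    (u : EuclideanSpace ℝ (Fin 2)) (hu : u = midpoint ℝ p r)
    (ε φ : ℝ) (hε : 0 < ε) (hεφ : ε < φ) (hφ : φ < (1 + ε) / 2) :
    dw ε φ q r p > dw ε φ u p q := by
  -- distinctness of the three points
  have hpq : p ≠ q := by
    have := hind.injective.ne (show (0 : Fin 3) ≠ 1 by decide)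
    simpa using this
  have hpr : p ≠ r := by
    have := hind.injective.ne (show (0 : Fin 3) ≠ 2 by decide)
    simpa using this
  have hqr : q ≠ r := by
    have := hind.injective.ne (show (1 : Fin 3) ≠ 2 by decide)
    simpa using this
  have hcol : ¬Collinear ℝ ({p, q, r} : Set (EuclideanSpace ℝ (Fin 2))) :=
    affineIndependent_iff_not_collinear_set.mp hind
  have hum : u = (2⁻¹ : ℝ) • (p + r) := by
    rw [hu, midpoint_eq_smul_add, invOf_eq_inv]
  -- basic norms positivity
  have hLpq : (0:ℝ) < ‖q - p‖ := by
    rw [norm_pos_iff, sub_ne_zero]; exact hpq.symm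
  have hLpr : (0:ℝ) < ‖r - p‖ := by
    rw [norm_pos_iff, sub_ne_zero]; exact hpr.symm
  have hLqr : (0:ℝ) < ‖r - q‖ := by
    rw [norm_pos_iff, sub_ne_zero]; exact hqr.symm
  -- r is not on the line through p, q
  have hrline : ∀ c : ℝ, r - p ≠ c • (q - p) := by
    intro c hc
    apply hcol
    have hmem : r ∈ line[ℝ, p, q] := by
      have h := (vadd_left_mem_affineSpan_pair (k := ℝ) (p₁ := p) (p₂ := q)
        (v := r - p)).mpr ⟨c, by simp [vsub_eq_sub, hc]⟩
      simpa [vadd_eq_add, sub_add_cancel] using h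
    have h2 := collinear_insert_of_mem_affineSpan_pair hmem
    have hsets : ({p, q, r} : Set (EuclideanSpace ℝ (Fin 2))) = {r, p, q} := by
      ext x; simp; tauto
    rw [hsets]; exact h2
  -- the Gram determinant is positive
  set K : ℝ := ‖q - p‖ ^ 2 * ‖r - p‖ ^ 2 - ⟪q - p, r - p⟫ ^ 2 with hKdef
  have hK : 0 < K := by
    set c : ℝ := ⟪q - p, r - p⟫ / ‖q - p‖ ^ 2 with hc
    have hw0 : r - p - c • (q - p) ≠ 0 := by
      intro h
      exact hrline c (by rw [← sub_eq_zero]; exact h)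
    have h1 : (0:ℝ) < ‖r - p - c • (q - p)‖ ^ 2 := pow_pos (norm_pos_iff.mpr hw0) 2
    have h2 : ‖r - p - c • (q - p)‖ ^ 2
        = ‖r - p‖ ^ 2 - 2 * (c * ⟪r - p, q - p⟫) + c ^ 2 * ‖q - p‖ ^ 2 := by
      rw [norm_sub_sq_real (r - p) (c • (q - p)), real_inner_smul_right, norm_smul,
        Real.norm_eq_abs, mul_pow, sq_abs]
    rw [h2, hc, real_inner_comm (q - p) (r - p)] at h1
    have h3 : 0 < (‖r - p‖ ^ 2 - 2 * (⟪q - p, r - p⟫ / ‖q - p‖ ^ 2 * ⟪q - p, r - p⟫)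
        + (⟪q - p, r - p⟫ / ‖q - p‖ ^ 2) ^ 2 * ‖q - p‖ ^ 2) * ‖q - p‖ ^ 2 :=
      mul_pos h1 (by positivity)
    rw [hKdef]
    have h4 : (‖r - p‖ ^ 2 - 2 * (⟪q - p, r - p⟫ / ‖q - p‖ ^ 2 * ⟪q - p, r - p⟫)
        + (⟪q - p, r - p⟫ / ‖q - p‖ ^ 2) ^ 2 * ‖q - p‖ ^ 2) * ‖q - p‖ ^ 2
        = ‖q - p‖ ^ 2 * ‖r - p‖ ^ 2 - ⟪q - p, r - p⟫ ^ 2 := by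
      field_simp
      ring
    rw [← h4]
    exact h3
  set s : ℝ := Real.sqrt K with hsdef
  have hs : 0 < s := Real.sqrt_pos.mpr hK
  -- q ≠ u and p ≠ u
  have hqu : q ≠ u := by
    intro h
    refine hrline 2 ?_
    have : q = (2⁻¹ : ℝ) • (p + r) := h ▸ hum ▸ rfl
    rw [show r - p = (2:ℝ) • ((2⁻¹ : ℝ) • (p + r)) - (2:ℝ) • p + (p - r) + (r - p) by module,
      ← this]
    module
  have hpu : p ≠ u := by
    intro h
    apply hpr
    have : p - r = 0 := by
      rw [show p - r = (2:ℝ) • p - (2:ℝ) • ((2⁻¹ : ℝ) • (p + r)) by module, ← hum, ← h]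
      module
    rwa [sub_eq_zero] at this
  have hM : (0:ℝ) < ‖q - u‖ := by
    rw [norm_pos_iff, sub_ne_zero]; exact hqu
  -- the six distances
  have g1 : ‖q - r‖ ^ 2 * ‖p - r‖ ^ 2 - ⟪q - r, p - r⟫ ^ 2 = K := by
    rw [show q - r = (1:ℝ) • (q - p) + (-1:ℝ) • (r - p) by module,
      show p - r = (0:ℝ) • (q - p) + (-1:ℝ) • (r - p) by module, gram_expand, hKdef]
    ring
  have d1 : Metric.infDist q (affineSpan ℝ ({r, p} : Set (EuclideanSpace ℝ (Fin 2))) : Set _)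
      = s / ‖r - p‖ := by
    rw [infDist_line r p q hpr, g1, norm_sub_rev p r, hsdef]
  have g2 : ‖r - q‖ ^ 2 * ‖p - q‖ ^ 2 - ⟪r - q, p - q⟫ ^ 2 = K := by
    rw [show r - q = (-1:ℝ) • (q - p) + (1:ℝ) • (r - p) by module,
      show p - q = (-1:ℝ) • (q - p) + (0:ℝ) • (r - p) by module, gram_expand, hKdef]
    ring
  have d2 : Metric.infDist r (affineSpan ℝ ({q, p} : Set (EuclideanSpace ℝ (Fin 2))) : Set _)
      = s / ‖q - p‖ := by
    rw [infDist_line q p r hpq, g2, norm_sub_rev p q, hsdef]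
  have g3 : ‖p - q‖ ^ 2 * ‖r - q‖ ^ 2 - ⟪p - q, r - q⟫ ^ 2 = K := by
    rw [show p - q = (-1:ℝ) • (q - p) + (0:ℝ) • (r - p) by module,
      show r - q = (-1:ℝ) • (q - p) + (1:ℝ) • (r - p) by module, gram_expand, hKdef]
    ring
  have d3 : Metric.infDist p (affineSpan ℝ ({q, r} : Set (EuclideanSpace ℝ (Fin 2))) : Set _)
      = s / ‖r - q‖ := by
    rw [infDist_line q r p hqr.symm, g3, hsdef]
  have hsq4 : Real.sqrt (K / 4) = s / 2 := by
    rw [show K / 4 = K * (1/2) ^ 2 by ring, Real.sqrt_mul hK.le,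
      Real.sqrt_sq (by norm_num : (0:ℝ) ≤ 1/2), hsdef]
    ring
  have g4 : ‖u - p‖ ^ 2 * ‖q - p‖ ^ 2 - ⟪u - p, q - p⟫ ^ 2 = K / 4 := by
    rw [show q - p = (1:ℝ) • (q - p) + (0:ℝ) • (r - p) by module,
      show u - p = (0:ℝ) • (q - p) + (2⁻¹:ℝ) • (r - p) by rw [hum]; module, gram_expand, hKdef]
    ring
  have d4 : Metric.infDist u (affineSpan ℝ ({p, q} : Set (EuclideanSpace ℝ (Fin 2))) : Set _)
      = s / (2 * ‖q - p‖) := by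
    rw [infDist_line p q u hpq.symm, g4, hsq4, div_div]
  have g5 : ‖p - u‖ ^ 2 * ‖q - u‖ ^ 2 - ⟪p - u, q - u⟫ ^ 2 = K / 4 := by
    rw [show p - u = (0:ℝ) • (q - p) + (-(2⁻¹):ℝ) • (r - p) by rw [hum]; module,
      show q - u = (1:ℝ) • (q - p) + (-(2⁻¹):ℝ) • (r - p) by rw [hum]; module, gram_expand,
      hKdef]
    ring
  have d5 : Metric.infDist p (affineSpan ℝ ({u, q} : Set (EuclideanSpace ℝ (Fin 2))) : Set _)
      = s / (2 * ‖q - u‖) := by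
    rw [infDist_line u q p hqu, g5, hsq4, div_div]
  have g6 : ‖q - u‖ ^ 2 * ‖p - u‖ ^ 2 - ⟪q - u, p - u⟫ ^ 2 = K / 4 := by
    rw [show q - u = (1:ℝ) • (q - p) + (-(2⁻¹):ℝ) • (r - p) by rw [hum]; module,
      show p - u = (0:ℝ) • (q - p) + (-(2⁻¹):ℝ) • (r - p) by rw [hum]; module, gram_expand,
      hKdef]
    ring
  have hnpu : ‖p - u‖ = ‖r - p‖ / 2 := by
    rw [show p - u = (-(2⁻¹):ℝ) • (r - p) by rw [hum]; module, norm_smul, Real.norm_eq_abs]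
    rw [abs_neg, abs_of_pos (by norm_num : (0:ℝ) < 2⁻¹)]
    ring
  have d6 : Metric.infDist q (affineSpan ℝ ({u, p} : Set (EuclideanSpace ℝ (Fin 2))) : Set _)
      = s / ‖r - p‖ := by
    rw [infDist_line u p q hpu, g6, hsq4, hnpu, div_div_div_cancel_right₀]
    norm_num
  -- Apollonius
  have ap : 4 * ‖q - u‖ ^ 2 = 2 * ‖q - p‖ ^ 2 + 2 * ‖r - q‖ ^ 2 - ‖r - p‖ ^ 2 := by
    rw [show q - u = (q - p) - (2⁻¹:ℝ) • (r - p) by rw [hum]; module,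
      show r - q = (r - p) - (q - p) by module]
    simp only [← real_inner_self_eq_norm_sq, inner_sub_left, inner_sub_right,
      real_inner_smul_left, real_inner_smul_right, real_inner_comm (r - p) (q - p)]
    ring
  -- numeric facts
  have hε1 : ε < 1 := by linarith
  have hφ1 : φ < 1 := by linarith
  have h2φ : 1 - ε < 2 * (1 - φ) := by linarith
  -- assemble
  unfold dw
  rw [d1, d2, d3, d4, d5, d6, gt_iff_lt, lt_min_iff]
  refine ⟨?_, lt_min_iff.mpr ⟨?_, ?_⟩⟩
  · refine lt_of_le_of_lt (le_trans (min_le_right _ _) (min_le_right _ _)) ?_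
    exact mul_lt_mul_of_pos_right (by linarith) (div_pos hs hLpr)
  · refine lt_of_le_of_lt (min_le_left _ _) ?_
    rw [show s / (2 * ‖q - p‖) = (1/2) * (s / ‖q - p‖) by field_simp, ← mul_assoc]
    exact mul_lt_mul_of_pos_right (by linarith) (div_pos hs hLpq)
  · by_cases h : ‖r - p‖ ≤ ‖r - q‖
    · refine lt_of_le_of_lt (le_trans (min_le_right _ _) (min_le_left _ _)) ?_
      have hlt : ‖r - q‖ < 2 * ‖q - u‖ := by
        have h1 : ‖r - p‖ ^ 2 ≤ ‖r - q‖ ^ 2 := pow_le_pow_left₀ hLpr.le h 2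
        have h2 : ‖r - q‖ ^ 2 < (2 * ‖q - u‖) ^ 2 := by
          rw [mul_pow]
          have := pow_pos hLpq 2
          linarith [ap]
        exact lt_of_pow_lt_pow_left₀ 2 (by positivity) h2
      exact mul_lt_mul_of_pos_left
        (div_lt_div_of_pos_left hs (by linarith) hlt) (by linarith)
    · push_neg at h
      refine lt_of_le_of_lt (le_trans (min_le_right _ _) (min_le_right _ _)) ?_
      exact mul_lt_mul_of_pos_left (div_lt_div_of_pos_left hs hLqr h) (by linarith)
end

section
/- Let V be a nonempty finite set with n = |V|, let δ > 0, C ≥ 0, and let (τ_i)_{i≥0} be a sequence of functions τ_i : V → ℝ such that: τ_0(p) ≥ 0 for all p; for every i, τ_{i+1}(p) ≥ τ_i(p) for all p and ∑_{p∈V} (τ_{i+1}(p) − τ_i(p)) ≥ δ; and for every i, max_{p∈V} τ_i(p) − min_{p∈V} τ_i(p) ≤ C. Then for every real T ≥ 0 and every natural number k with k ≥ n·(T + C)/δ, we have min_{p∈V} τ_k(p) ≥ T. -/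
theorem stmt_10 {α : Type*} [DecidableEq α] (V : Finset α) (hV : V.Nonempty)
    (δ C : ℝ) (hδ : 0 < δ) (hC : 0 ≤ C)
    (τ : ℕ → α → ℝ)
    (h0 : ∀ p ∈ V, 0 ≤ τ 0 p)
    (hmono : ∀ i, ∀ p ∈ V, τ i p ≤ τ (i + 1) p)
    (hprog : ∀ i, δ ≤ ∑ p ∈ V, (τ (i + 1) p - τ i p))
    (hspread : ∀ i, V.sup' hV (τ i) - V.inf' hV (τ i) ≤ C) :
    ∀ T : ℝ, 0 ≤ T → ∀ k : ℕ, (V.card : ℝ) * (T + C) / δ ≤ k →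
      T ≤ V.inf' hV (τ k) := by
  intro T hT k hk
  have hn : (0:ℝ) < V.card := by exact_mod_cast Finset.card_pos.mpr hV
  -- sum lower bound by telescoping
  have hsum : (k : ℝ) * δ ≤ ∑ p ∈ V, τ k p := by
    have key : ∀ k : ℕ, (k : ℝ) * δ + ∑ p ∈ V, τ 0 p ≤ ∑ p ∈ V, τ k p := by
      intro k
      induction k with
      | zero => simp
      | succ m ih =>
        have := hprog m
        have h2 : ∑ p ∈ V, τ (m+1) p = (∑ p ∈ V, (τ (m+1) p - τ m p)) + ∑ p ∈ V, τ m p := by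
          rw [← Finset.sum_add_distrib]; simp
        push_cast
        rw [h2]
        nlinarith
    have h0' : (0:ℝ) ≤ ∑ p ∈ V, τ 0 p := Finset.sum_nonneg h0
    have := key k
    linarith
  -- each term ≤ inf + C
  have hub : ∑ p ∈ V, τ k p ≤ (V.card : ℝ) * (V.inf' hV (τ k) + C) := by
    calc ∑ p ∈ V, τ k p ≤ ∑ _p ∈ V, (V.inf' hV (τ k) + C) := by
          apply Finset.sum_le_sum
          intro p hp
          have h1 : τ k p ≤ V.sup' hV (τ k) := Finset.le_sup' _ hp
          have := hspread k
          linarith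
      _ = (V.card : ℝ) * (V.inf' hV (τ k) + C) := by
          rw [Finset.sum_const, nsmul_eq_mul]
  have hkδ : (V.card : ℝ) * (T + C) ≤ (k : ℝ) * δ := by
    have := (div_le_iff₀ hδ).mp hk
    linarith
  nlinarith
end
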